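/- Let n ≥ 2 and let K and L be convex bodies in ℝⁿ with K ∩ L ≠ ∅. If h_{K∩L}(u) = min{h_K(u), h_L(u)} for every u ∈ S^{n−1}, then K ∪ L is convex. -/

import Mathlib

noncomputable def suppFn {n : ℕ} (K : Set (EuclideanSpace ℝ (Fin n)))
    (u : EuclideanSpace ℝ (Fin n)) : ℝ :=
  sSup ((fun x => (inner ℝ x u : ℝ)) '' K)

variable {n : ℕ}

lemma le_suppFn {K : Set (EuclideanSpace ℝ (Fin n))} (hK : IsCompact K)
    {x : EuclideanSpace ℝ (Fin n)} (hx : x ∈ K) (u : EuclideanSpace ℝ (Fin n)) :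
    (inner ℝ x u : ℝ) ≤ suppFn K u :=
  le_csSup ((hK.image ((continuous_id.inner continuous_const))).bddAbove)
    (Set.mem_image_of_mem _ hx)

lemma exists_suppFn {K : Set (EuclideanSpace ℝ (Fin n))} (hK : IsCompact K)
    (hne : K.Nonempty) (u : EuclideanSpace ℝ (Fin n)) :
    ∃ x ∈ K, suppFn K u = (inner ℝ x u : ℝ) := by
  obtain ⟨x, hx, hmax⟩ := hK.exists_isMaxOn (f := fun x => (inner ℝ x u : ℝ)) hne
    ((continuous_id.inner continuous_const)).continuousOn
  refine ⟨x, hx, ?_⟩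
  exact IsGreatest.csSup_eq ⟨Set.mem_image_of_mem _ hx, fun y ⟨a, ha, hay⟩ => hay ▸ hmax ha⟩

lemma suppFn_mono {K L : Set (EuclideanSpace ℝ (Fin n))} (hK : IsCompact K)
    (hKL : K ⊆ L) (hL : IsCompact L) (hne : K.Nonempty) (u : EuclideanSpace ℝ (Fin n)) :
    suppFn K u ≤ suppFn L u := by
  obtain ⟨x, hx, hxe⟩ := exists_suppFn hK hne u
  exact hxe ▸ le_suppFn hL (hKL hx) u

lemma suppFn_continuous {K : Set (EuclideanSpace ℝ (Fin n))} (hK : IsCompact K)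
    (hne : K.Nonempty) : Continuous (suppFn K) := by
  obtain ⟨r, hr⟩ := hK.isBounded.subset_closedBall 0
  have key : ∀ w₁ w₂, suppFn K w₁ - suppFn K w₂ ≤ (max r 0) * dist w₁ w₂ := by
    intro w₁ w₂
    obtain ⟨x, hx, hxe⟩ := exists_suppFn hK hne w₁
    have h1 : (inner ℝ x w₂ : ℝ) ≤ suppFn K w₂ := le_suppFn hK hx w₂
    have h2 : (inner ℝ x (w₁ - w₂) : ℝ) ≤ ‖x‖ * ‖w₁ - w₂‖ :=
      (real_inner_le_norm x (w₁ - w₂))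
    have hxr : ‖x‖ ≤ max r 0 := le_trans (by simpa using hr hx) (le_max_left _ _)
    have h3 : (inner ℝ x (w₁ - w₂) : ℝ) ≤ (max r 0) * ‖w₁ - w₂‖ :=
      h2.trans (mul_le_mul_of_nonneg_right hxr (norm_nonneg _))
    have := inner_sub_right (𝕜 := ℝ) x w₁ w₂
    rw [hxe, dist_eq_norm]
    nlinarith [this]
  have lip : LipschitzWith ⟨max r 0, le_max_right _ _⟩ (suppFn K) := by
    apply LipschitzWith.of_dist_le_mul
    intro w₁ w₂
    rw [Real.dist_eq, abs_sub_le_iff]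
    constructor
    · exact key w₁ w₂
    · rw [dist_comm]; exact key w₂ w₁
  exact lip.continuous

lemma suppFn_separate {K : Set (EuclideanSpace ℝ (Fin n))} (hK : IsCompact K)
    (hKcv : Convex ℝ K) (hne : K.Nonempty) {z : EuclideanSpace ℝ (Fin n)} (hz : z ∉ K) :
    ∃ u : EuclideanSpace ℝ (Fin n), ‖u‖ = 1 ∧ suppFn K u < (inner ℝ z u : ℝ) := by
  obtain ⟨f, c, hfc, hcz⟩ := geometric_hahn_banach_closed_point hKcv hK.isClosed hz
  set v := (InnerProductSpace.toDual ℝ (EuclideanSpace ℝ (Fin n))).symm f with hv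
  have hfv : ∀ x, f x = (inner ℝ x v : ℝ) := by
    intro x
    rw [real_inner_comm]
    exact (InnerProductSpace.toDual_symm_apply).symm
  have hvne : v ≠ 0 := by
    intro h0
    obtain ⟨a, ha⟩ := hne
    have := hfc a ha
    rw [hfv a, h0] at this
    rw [hfv z, h0] at hcz
    simp at this hcz
    linarith
  refine ⟨‖v‖⁻¹ • v, ?_, ?_⟩
  · simp [norm_smul, norm_ne_zero_iff.mpr hvne]
  · have hvpos : (0:ℝ) < ‖v‖ := norm_pos_iff.mpr hvne
    obtain ⟨x, hx, hxe⟩ := exists_suppFn hK hne (‖v‖⁻¹ • v)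
    rw [hxe, real_inner_smul_right, real_inner_smul_right]
    have h1 : (inner ℝ x v : ℝ) < inner ℝ z v := by
      rw [← hfv x, ← hfv z]; exact lt_trans (hfc x hx) hcz
    exact mul_lt_mul_of_pos_left h1 (by positivity)

lemma key_lemma {K L : Set (EuclideanSpace ℝ (Fin n))}
    (hKcp : IsCompact K) (hKcv : Convex ℝ K)
    (hLcp : IsCompact L) (hLcv : Convex ℝ L)
    (hKL : (K ∩ L).Nonempty)
    (hmin : ∀ u ∈ Metric.sphere (0 : EuclideanSpace ℝ (Fin n)) 1,
      suppFn (K ∩ L) u = min (suppFn K u) (suppFn L u))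
    {x y : EuclideanSpace ℝ (Fin n)} (hx : x ∈ K) (hy : y ∈ L)
    {a b : ℝ} (ha : 0 ≤ a) (hb : 0 ≤ b) (hab : a + b = 1) :
    a • x + b • y ∈ K ∪ L := by
  by_contra hz
  rw [Set.mem_union] at hz
  push_neg at hz
  obtain ⟨hzK, hzL⟩ := hz
  set z := a • x + b • y with hzdef
  have hKne : K.Nonempty := ⟨x, hx⟩
  have hLne : L.Nonempty := ⟨y, hy⟩
  have hMcp : IsCompact (K ∩ L) := hKcp.inter_right hLcp.isClosed
  have hMcv : Convex ℝ (K ∩ L) := hKcv.inter hLcv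
  obtain ⟨u, hu1, huK⟩ := suppFn_separate hKcp hKcv hKne hzK
  obtain ⟨v, hv1, hvL⟩ := suppFn_separate hLcp hLcv hLne hzL
  set C : Set (EuclideanSpace ℝ (Fin n)) := {w | suppFn (K ∩ L) w < (inner ℝ z w : ℝ)} with hC
  -- membership facts
  have hMsubK : K ∩ L ⊆ K := Set.inter_subset_left
  have hMsubL : K ∩ L ⊆ L := Set.inter_subset_right
  have huC : u ∈ C := lt_of_le_of_lt (suppFn_mono hMcp hMsubK hKcp hKL u) huK
  have hvC : v ∈ C := lt_of_le_of_lt (suppFn_mono hMcp hMsubL hLcp hKL v) hvL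
  have h0C : (0 : EuclideanSpace ℝ (Fin n)) ∉ C := by
    obtain ⟨p, hp, hpe⟩ := exists_suppFn hMcp hKL 0
    simp only [hC, Set.mem_setOf_eq, hpe]
    simp
  -- C is a convex cone
  have hCcv : Convex ℝ C := by
    intro w₁ hw₁ w₂ hw₂ p q hp hq hpq
    simp only [hC, Set.mem_setOf_eq] at hw₁ hw₂ ⊢
    obtain ⟨x₀, hx₀, he⟩ := exists_suppFn hMcp hKL (p • w₁ + q • w₂)
    rw [he, inner_add_right, real_inner_smul_right, real_inner_smul_right,
      inner_add_right, real_inner_smul_right, real_inner_smul_right]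
    have f1 : (inner ℝ x₀ w₁ : ℝ) ≤ suppFn (K ∩ L) w₁ := le_suppFn hMcp hx₀ w₁
    have f2 : (inner ℝ x₀ w₂ : ℝ) ≤ suppFn (K ∩ L) w₂ := le_suppFn hMcp hx₀ w₂
    rcases hp.lt_or_eq with hp' | hp'
    · have g1 : p * (inner ℝ x₀ w₁ : ℝ) < p * (inner ℝ z w₁ : ℝ) :=
        mul_lt_mul_of_pos_left (lt_of_le_of_lt f1 hw₁) hp'
      have g2 : q * (inner ℝ x₀ w₂ : ℝ) ≤ q * (inner ℝ z w₂ : ℝ) :=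
        mul_le_mul_of_nonneg_left (le_of_lt (lt_of_le_of_lt f2 hw₂)) hq
      linarith
    · have hq1 : q = 1 := by linarith
      have g2 : q * (inner ℝ x₀ w₂ : ℝ) < q * (inner ℝ z w₂ : ℝ) := by
        rw [hq1, one_mul, one_mul]; exact lt_of_le_of_lt f2 hw₂
      have g1 : p * (inner ℝ x₀ w₁ : ℝ) ≤ p * (inner ℝ z w₁ : ℝ) := by
        rw [← hp']; simp
      linarith
  have hCcone : ∀ (c : ℝ), 0 < c → ∀ w ∈ C, c • w ∈ C := by
    intro c hc w hw
    simp only [hC, Set.mem_setOf_eq] at hw ⊢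
    obtain ⟨x₀, hx₀, he⟩ := exists_suppFn hMcp hKL (c • w)
    rw [he, real_inner_smul_right, real_inner_smul_right]
    exact mul_lt_mul_of_pos_left
      (lt_of_le_of_lt (le_suppFn hMcp hx₀ w) hw) hc
  -- the image of C under radial projection is sphere ∩ C, hence preconnected
  have himg : (fun w : EuclideanSpace ℝ (Fin n) => ‖w‖⁻¹ • w) '' C
      = Metric.sphere (0 : EuclideanSpace ℝ (Fin n)) 1 ∩ C := by
    apply Set.Subset.antisymm
    · rintro _ ⟨w, hw, rfl⟩
      have hwne : w ≠ 0 := fun h => h0C (h ▸ hw)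
      have hwn : (0:ℝ) < ‖w‖ := norm_pos_iff.mpr hwne
      constructor
      · rw [mem_sphere_zero_iff_norm, norm_smul]
        simp [abs_of_pos (inv_pos.mpr hwn), inv_mul_cancel₀ (ne_of_gt hwn)]
      · exact hCcone _ (inv_pos.mpr hwn) w hw
    · rintro w ⟨hw1, hw2⟩
      refine ⟨w, hw2, ?_⟩
      rw [mem_sphere_zero_iff_norm] at hw1
      simp [hw1]
  have hcont : ContinuousOn (fun w : EuclideanSpace ℝ (Fin n) => ‖w‖⁻¹ • w) C := by
    apply ContinuousOn.fun_smul
    · exact (continuous_norm.continuousOn).inv₀ fun w hw =>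
        norm_ne_zero_iff.mpr (fun h => h0C (h ▸ hw))
    · exact continuousOn_id
  have hpre : IsPreconnected (Metric.sphere (0 : EuclideanSpace ℝ (Fin n)) 1 ∩ C) :=
    himg ▸ (hCcv.isPreconnected.image _ hcont)
  -- two open sets
  set U : Set (EuclideanSpace ℝ (Fin n)) := {w | suppFn K w < (inner ℝ z w : ℝ)} with hU
  set V : Set (EuclideanSpace ℝ (Fin n)) := {w | suppFn L w < (inner ℝ z w : ℝ)} with hV
  have hUopen : IsOpen U := isOpen_lt (suppFn_continuous hKcp hKne)
    (continuous_const.inner continuous_id)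
  have hVopen : IsOpen V := isOpen_lt (suppFn_continuous hLcp hLne)
    (continuous_const.inner continuous_id)
  have hsub : Metric.sphere (0 : EuclideanSpace ℝ (Fin n)) 1 ∩ C ⊆ U ∪ V := by
    rintro w ⟨hws, hwc⟩
    simp only [hC, Set.mem_setOf_eq] at hwc
    rw [hmin w hws, min_lt_iff] at hwc
    rcases hwc with h | h
    · exact Or.inl h
    · exact Or.inr h
  have hUne : ((Metric.sphere (0 : EuclideanSpace ℝ (Fin n)) 1 ∩ C) ∩ U).Nonempty :=
    ⟨u, ⟨⟨mem_sphere_zero_iff_norm.mpr hu1, huC⟩, huK⟩⟩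
  have hVne : ((Metric.sphere (0 : EuclideanSpace ℝ (Fin n)) 1 ∩ C) ∩ V).Nonempty :=
    ⟨v, ⟨⟨mem_sphere_zero_iff_norm.mpr hv1, hvC⟩, hvL⟩⟩
  obtain ⟨w, ⟨_, hwU, hwV⟩⟩ := hpre U V hUopen hVopen hsub hUne hVne
  -- final contradiction
  have hwU' : suppFn K w < (inner ℝ z w : ℝ) := hwU
  have hwV' : suppFn L w < (inner ℝ z w : ℝ) := hwV
  set c : ℝ := max (suppFn K w) (suppFn L w) with hc
  have e1 : (inner ℝ z w : ℝ) = a * (inner ℝ x w : ℝ) + b * (inner ℝ y w : ℝ) := by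
    rw [hzdef, inner_add_left, real_inner_smul_left, real_inner_smul_left]
  have f1 : (inner ℝ x w : ℝ) ≤ c := (le_suppFn hKcp hx w).trans (le_max_left _ _)
  have f2 : (inner ℝ y w : ℝ) ≤ c := (le_suppFn hLcp hy w).trans (le_max_right _ _)
  have g1 : a * (inner ℝ x w : ℝ) ≤ a * c := mul_le_mul_of_nonneg_left f1 ha
  have g2 : b * (inner ℝ y w : ℝ) ≤ b * c := mul_le_mul_of_nonneg_left f2 hb
  have hzc : (inner ℝ z w : ℝ) ≤ c := by
    calc (inner ℝ z w : ℝ) = a * (inner ℝ x w : ℝ) + b * (inner ℝ y w : ℝ) := e1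
      _ ≤ a * c + b * c := add_le_add g1 g2
      _ = (a + b) * c := by ring
      _ = c := by rw [hab, one_mul]
  have hcz : c < (inner ℝ z w : ℝ) := max_lt hwU' hwV'
  linarith

/-- If `K, L ⊆ ℝⁿ` (`n ≥ 2`) are convex bodies with `K ∩ L ≠ ∅` and
`h_{K∩L}(u) = min (h_K(u)) (h_L(u))` for every unit vector `u`, then `K ∪ L` is convex. -/
theorem stmt1 {n : ℕ} (hn : 2 ≤ n)
    (K L : Set (EuclideanSpace ℝ (Fin n)))
    (hKcp : IsCompact K) (hKcv : Convex ℝ K) (hKint : (interior K).Nonempty)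
    (hLcp : IsCompact L) (hLcv : Convex ℝ L) (hLint : (interior L).Nonempty)
    (hKL : (K ∩ L).Nonempty)
    (hmin : ∀ u ∈ Metric.sphere (0 : EuclideanSpace ℝ (Fin n)) 1,
      suppFn (K ∩ L) u = min (suppFn K u) (suppFn L u)) :
    Convex ℝ (K ∪ L) := by
  have hKL' : (L ∩ K).Nonempty := by rwa [Set.inter_comm]
  have hmin' : ∀ u ∈ Metric.sphere (0 : EuclideanSpace ℝ (Fin n)) 1,
      suppFn (L ∩ K) u = min (suppFn L u) (suppFn K u) := by
    intro u hu
    rw [Set.inter_comm, min_comm]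
    exact hmin u hu
  intro x hx y hy a b ha hb hab
  rcases hx with hxK | hxL <;> rcases hy with hyK | hyL
  · exact Or.inl (hKcv hxK hyK ha hb hab)
  · exact key_lemma hKcp hKcv hLcp hLcv hKL hmin hxK hyL ha hb hab
  · have := key_lemma hLcp hLcv hKcp hKcv hKL' hmin' hxL hyK ha hb hab
    rwa [Set.union_comm] at this
  · exact Or.inr (hLcv hxL hyL ha hb hab)
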